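/- Let γ > 0 and let x be a steady state of the SBCM. Suppose there exists a persuadable node i such that (1 − w_ij(x))·(x_j − x_i)² > 1/(2γ) for every neighbor j of i. Then the Jacobian block J_𝒫(x) has at least one strictly positive real eigenvalue; in particular, the steady state x is linearly unstable. -/

import Mathlib

open Finset Filter

namespace SBCM

variable {V : Type*} [Fintype V] [DecidableEq V]

/-- Sigmoidal influence weight. -/
noncomputable def wt (G : SimpleGraph V) [DecidableRel G.Adj] (γ δ : ℝ) (x : V → ℝ)
    (i j : V) : ℝ :=
  if G.Adj i j then 1 / (1 + Real.exp (γ * (x i - x j) ^ 2 - γ * δ)) else 0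

/-- SBCM update operator. -/
noncomputable def F (G : SimpleGraph V) [DecidableRel G.Adj] (Z : Finset V) (γ δ : ℝ)
    (x : V → ℝ) (i : V) : ℝ :=
  if i ∈ Z then 0
  else (∑ j, wt G γ δ x i j * (x j - x i)) / (∑ j, wt G γ δ x i j)

/-- Jacobian block over the persuadable nodes. -/
noncomputable def Jp (G : SimpleGraph V) [DecidableRel G.Adj] (Z : Finset V) (γ δ : ℝ)
    (x : V → ℝ) : Matrix {v : V // v ∉ Z} {v : V // v ∉ Z} ℝ :=
  fun i j => fderiv ℝ (fun y : V → ℝ => F G Z γ δ y i.val) x (Pi.single (j : V) (1 : ℝ))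

/-- `μ` is a (real) eigenvalue of the matrix `M`. -/
def HasEig {n : Type*} [Fintype n] (M : Matrix n n ℝ) (μ : ℝ) : Prop :=
  ∃ φ : n → ℝ, φ ≠ 0 ∧ M.mulVec φ = μ • φ

/-- All eigenvalues of `M` are strictly negative. -/
def LinStable {n : Type*} [Fintype n] (M : Matrix n n ℝ) : Prop :=
  ∀ μ : ℝ, HasEig M μ → μ < 0

/-- `M` has a strictly positive eigenvalue. -/
def LinUnstable {n : Type*} [Fintype n] (M : Matrix n n ℝ) : Prop :=
  ∃ μ : ℝ, 0 < μ ∧ HasEig M μ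

end SBCM

/-! ### Auxiliary material for the proof -/

section Aux

open SBCM
set_option linter.unusedSectionVars false

/-- The scalar sigmoid. -/
noncomputable def SBCMsig (γ δ t : ℝ) : ℝ := 1 / (1 + Real.exp (γ * t ^ 2 - γ * δ))

lemma SBCM_one_add_exp_pos (u : ℝ) : 0 < 1 + Real.exp u := by positivity

lemma hasDerivAt_SBCMsig (γ δ t : ℝ) :
    HasDerivAt (fun s => SBCMsig γ δ s)
      (-(2 * γ * t) * (SBCMsig γ δ t * (1 - SBCMsig γ δ t))) t := by
  have hpos := SBCM_one_add_exp_pos (γ * t ^ 2 - γ * δ)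
  have hne : (1 + Real.exp (γ * t ^ 2 - γ * δ)) ≠ 0 := ne_of_gt hpos
  have h1 : HasDerivAt (fun s : ℝ => γ * s ^ 2 - γ * δ) (γ * (2 * t)) t := by
    simpa using ((hasDerivAt_pow 2 t).const_mul γ).sub_const (γ * δ)
  have h2 := (h1.exp.const_add 1).inv hne
  have hfun : (fun s => SBCMsig γ δ s) = fun s => (1 + Real.exp (γ * s ^ 2 - γ * δ))⁻¹ := by
    funext s; rw [SBCMsig, one_div]
  rw [hfun]
  refine h2.congr_deriv ?_
  rw [SBCMsig]
  field_simp
  ring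

variable {V : Type*} [Fintype V] [DecidableEq V]
variable (G : SimpleGraph V) [DecidableRel G.Adj] (γ δ : ℝ) (x : V → ℝ)

lemma SBCMwt_eq (i j : V) :
    wt G γ δ x i j = if G.Adj i j then SBCMsig γ δ (x i - x j) else 0 := rfl

/-- Entries of the symmetric interaction matrix appearing in the Jacobian. -/
noncomputable def amat (i j : V) : ℝ :=
  wt G γ δ x i j * (1 - 2 * γ * (1 - wt G γ δ x i j) * (x j - x i) ^ 2)

/-- The strength of node `i`. -/
noncomputable def st (i : V) : ℝ := ∑ j, wt G γ δ x i j

lemma amat_symm (i j : V) : amat G γ δ x i j = amat G γ δ x j i := by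
  have hw : wt G γ δ x i j = wt G γ δ x j i := by
    unfold wt
    have hsq : (x i - x j) ^ 2 = (x j - x i) ^ 2 := by ring
    rw [hsq]
    by_cases h : G.Adj i j
    · rw [if_pos h, if_pos h.symm]
    · rw [if_neg h, if_neg fun h' => h h'.symm]
  unfold amat
  rw [hw]
  ring_nf

lemma amat_nonpos_of_cond {i j : V} (hγ : 0 < γ)
    (hc : G.Adj i j → (1 - wt G γ δ x i j) * (x j - x i) ^ 2 > 1 / (2 * γ)) :
    amat G γ δ x i j ≤ 0 := by
  by_cases h : G.Adj i j
  · have hw : 0 < wt G γ δ x i j := by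
      rw [wt, if_pos h]
      positivity
    have h2 : (1 : ℝ) < 2 * γ * ((1 - wt G γ δ x i j) * (x j - x i) ^ 2) := by
      have hc' := hc h
      rw [gt_iff_lt, div_lt_iff₀ (by positivity)] at hc'
      nlinarith
    have : 1 - 2 * γ * (1 - wt G γ δ x i j) * (x j - x i) ^ 2 < 0 := by nlinarith
    exact le_of_lt (mul_neg_of_pos_of_neg hw this)
  · simp [amat, wt, h]

lemma amat_neg_of_cond {i j : V} (hγ : 0 < γ) (h : G.Adj i j)
    (hc : (1 - wt G γ δ x i j) * (x j - x i) ^ 2 > 1 / (2 * γ)) :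
    amat G γ δ x i j < 0 := by
  have hw : 0 < wt G γ δ x i j := by
    rw [wt, if_pos h]; positivity
  have h2 : (1 : ℝ) < 2 * γ * ((1 - wt G γ δ x i j) * (x j - x i) ^ 2) := by
    rw [gt_iff_lt, div_lt_iff₀ (by positivity)] at hc
    nlinarith
  have : 1 - 2 * γ * (1 - wt G γ δ x i j) * (x j - x i) ^ 2 < 0 := by nlinarith
  exact mul_neg_of_pos_of_neg hw this

lemma wt_nonneg (i j : V) : 0 ≤ wt G γ δ x i j := by
  rw [wt]; split
  · positivity
  · exact le_rfl

lemma wt_pos_of_adj {i j : V} (h : G.Adj i j) : 0 < wt G γ δ x i j := by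
  rw [wt, if_pos h]; positivity

lemma st_pos {i j : V} (h : G.Adj i j) : 0 < st G γ δ x i := by
  apply Finset.sum_pos' (fun k _ => wt_nonneg G γ δ x i k)
  exact ⟨j, Finset.mem_univ j, wt_pos_of_adj G γ δ x h⟩

/-- Fréchet derivative of a single numerator term of the SBCM operator. -/
lemma hasFDerivAt_term (i j : V) :
    HasFDerivAt (fun y : V → ℝ => wt G γ δ y i j * (y j - y i))
      (amat G γ δ x i j •
        ((ContinuousLinearMap.proj j : (V → ℝ) →L[ℝ] ℝ) - ContinuousLinearMap.proj i)) x := by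
  by_cases h : G.Adj i j
  · have hm : HasFDerivAt (fun y : V → ℝ => y j - y i)
        ((ContinuousLinearMap.proj j : (V → ℝ) →L[ℝ] ℝ) - ContinuousLinearMap.proj i) x :=
      ((ContinuousLinearMap.proj j : (V → ℝ) →L[ℝ] ℝ).hasFDerivAt.sub
        (ContinuousLinearMap.proj i : (V → ℝ) →L[ℝ] ℝ).hasFDerivAt)
    have hl : HasFDerivAt (fun y : V → ℝ => y i - y j)
        ((ContinuousLinearMap.proj i : (V → ℝ) →L[ℝ] ℝ) - ContinuousLinearMap.proj j) x :=
      ((ContinuousLinearMap.proj i : (V → ℝ) →L[ℝ] ℝ).hasFDerivAt.sub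
        (ContinuousLinearMap.proj j : (V → ℝ) →L[ℝ] ℝ).hasFDerivAt)
    have hs := (hasDerivAt_SBCMsig γ δ (x i - x j)).comp_hasFDerivAt x hl
    have key := hs.mul hm
    have hfun : (fun y : V → ℝ => wt G γ δ y i j * (y j - y i))
        = fun y : V → ℝ =>
            ((fun s => SBCMsig γ δ s) ∘ fun y : V → ℝ => y i - y j) y * (y j - y i) := by
      funext y
      simp [SBCMwt_eq, if_pos h, Function.comp]
    rw [hfun]
    refine key.congr_fderiv ?_
    ext1 y
    simp only [ContinuousLinearMap.smul_apply, ContinuousLinearMap.add_apply,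
      ContinuousLinearMap.sub_apply, ContinuousLinearMap.proj_apply, smul_eq_mul,
      Function.comp]
    rw [amat, SBCMwt_eq, if_pos h]
    ring
  · have h0 : amat G γ δ x i j = 0 := by simp [amat, wt, h]
    have hfun : (fun y : V → ℝ => wt G γ δ y i j * (y j - y i)) = fun _ => (0 : ℝ) := by
      funext y; simp [wt, h]
    rw [h0, zero_smul, hfun]
    exact hasFDerivAt_const 0 x

lemma differentiableAt_wt (i j : V) :
    DifferentiableAt ℝ (fun y : V → ℝ => wt G γ δ y i j) x := by
  by_cases h : G.Adj i j
  · have hl : HasFDerivAt (fun y : V → ℝ => y i - y j)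
        ((ContinuousLinearMap.proj i : (V → ℝ) →L[ℝ] ℝ) - ContinuousLinearMap.proj j) x :=
      ((ContinuousLinearMap.proj i : (V → ℝ) →L[ℝ] ℝ).hasFDerivAt.sub
        (ContinuousLinearMap.proj j : (V → ℝ) →L[ℝ] ℝ).hasFDerivAt)
    have hs := (hasDerivAt_SBCMsig γ δ (x i - x j)).comp_hasFDerivAt x hl
    have hfun : (fun y : V → ℝ => wt G γ δ y i j)
        = (fun s => SBCMsig γ δ s) ∘ fun y : V → ℝ => y i - y j := by
      funext y; simp [SBCMwt_eq, if_pos h, Function.comp]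
    rw [hfun]
    exact hs.differentiableAt
  · have hfun : (fun y : V → ℝ => wt G γ δ y i j) = fun _ => (0 : ℝ) := by
      funext y; simp [wt, h]
    rw [hfun]
    exact differentiableAt_const 0

/-- Derivative of `F · i` at a steady-state-like point. -/
lemma hasFDerivAt_F (Z : Finset V) (i : V) (hi : i ∉ Z)
    (hN : ∑ j, wt G γ δ x i j * (x j - x i) = 0)
    (hS : st G γ δ x i ≠ 0) :
    HasFDerivAt (fun y : V → ℝ => F G Z γ δ y i)
      ((st G γ δ x i)⁻¹ • ∑ j, amat G γ δ x i j •
        ((ContinuousLinearMap.proj j : (V → ℝ) →L[ℝ] ℝ) - ContinuousLinearMap.proj i)) x := by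
  have hNder : HasFDerivAt (fun y : V → ℝ => ∑ j, wt G γ δ y i j * (y j - y i))
      (∑ j, amat G γ δ x i j •
        ((ContinuousLinearMap.proj j : (V → ℝ) →L[ℝ] ℝ) - ContinuousLinearMap.proj i)) x :=
    HasFDerivAt.fun_sum fun j _ => hasFDerivAt_term G γ δ x i j
  have hSd : DifferentiableAt ℝ (fun y : V → ℝ => ∑ j, wt G γ δ y i j) x :=
    DifferentiableAt.fun_sum fun j _ => differentiableAt_wt G γ δ x i j
  have hSder := hSd.hasFDerivAt
  have hSne : (∑ j, wt G γ δ x i j) ≠ 0 := hS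
  have hInv := (hasDerivAt_inv hSne).comp_hasFDerivAt x hSder
  have key := hNder.mul hInv
  rw [hN, zero_smul, zero_add] at key
  have hfun : (fun y : V → ℝ => F G Z γ δ y i)
      = fun y : V → ℝ => (∑ j, wt G γ δ y i j * (y j - y i)) *
          ((fun t : ℝ => t⁻¹) ∘ fun y : V → ℝ => ∑ j, wt G γ δ y i j) y := by
    funext y
    rw [F, if_neg hi]
    simp [div_eq_mul_inv, Function.comp]
  rw [hfun]
  exact key.congr_fderiv rfl

/-- Explicit formula for the entries of the Jacobian block at a steady state. -/
lemma Jp_apply (Z : Finset V)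
    (hss : ∀ i' : V, i' ∉ Z → ∑ j, wt G γ δ x i' j * (x j - x i') = 0)
    (hs : ∀ i' : V, i' ∉ Z → st G γ δ x i' ≠ 0)
    (u v : {v : V // v ∉ Z}) :
    Jp G Z γ δ x u v = (st G γ δ x u)⁻¹ *
      (amat G γ δ x u v - (if (u : V) = (v : V) then ∑ j, amat G γ δ x u j else 0)) := by
  rw [Jp, (hasFDerivAt_F G γ δ x Z u u.2 (hss u u.2) (hs u u.2)).fderiv]
  simp only [ContinuousLinearMap.smul_apply, ContinuousLinearMap.sum_apply,
    ContinuousLinearMap.sub_apply, ContinuousLinearMap.proj_apply, smul_eq_mul]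
  congr 1
  simp only [Pi.single_apply, mul_sub, Finset.sum_sub_distrib, mul_ite, mul_one, mul_zero]
  by_cases h : (u : V) = (v : V)
  · simp [h, Finset.sum_ite_eq']
  · have h' : ¬ ((u : V) = (v : V)) := h
    simp [h', Finset.sum_ite_eq']

end Aux

/-- If at a steady state some persuadable node `i` satisfies
`(1 − w_ij)(x_j − x_i)² > 1/(2γ)` for every neighbor `j`, then the Jacobian block
`J_𝒫` has a strictly positive eigenvalue, i.e., the steady state is linearly unstable. -/
theorem stmt_0 {V : Type*} [Fintype V] [DecidableEq V]
    (G : SimpleGraph V) [DecidableRel G.Adj] (Z : Finset V)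
    (hnbr : ∀ i : V, i ∉ Z → ∃ j, G.Adj i j)
    (γ δ : ℝ) (hγ : 0 < γ) (hδ : 0 ≤ δ)
    (x : V → ℝ) (hss : ∀ i, SBCM.F G Z γ δ x i = 0)
    (i : V) (hiP : i ∉ Z)
    (hcond : ∀ j, G.Adj i j →
      (1 - SBCM.wt G γ δ x i j) * (x j - x i) ^ 2 > 1 / (2 * γ)) :
    SBCM.LinUnstable (SBCM.Jp G Z γ δ x) := by
  classical
  -- basic positivity of strengths
  have hstpos : ∀ i' : V, i' ∉ Z → 0 < st G γ δ x i' := by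
    intro i' hi'
    obtain ⟨j, hj⟩ := hnbr i' hi'
    exact st_pos G γ δ x hj
  have hstne : ∀ i' : V, i' ∉ Z → st G γ δ x i' ≠ 0 :=
    fun i' hi' => ne_of_gt (hstpos i' hi')
  -- numerators vanish at the steady state
  have hnum : ∀ i' : V, i' ∉ Z → ∑ j, SBCM.wt G γ δ x i' j * (x j - x i') = 0 := by
    intro i' hi'
    have h := hss i'
    rw [SBCM.F, if_neg hi'] at h
    rcases div_eq_zero_iff.mp h with h' | h'
    · exact h'
    · exact absurd h' (hstne i' hi')
  set P := {v : V // v ∉ Z}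
  let i₀ : P := ⟨i, hiP⟩
  -- the B matrix
  set A : Matrix P P ℝ := fun u v =>
    amat G γ δ x u v - (if (u : V) = (v : V) then ∑ j, amat G γ δ x u j else 0) with hA
  have hJp : ∀ u v : P, SBCM.Jp G Z γ δ x u v = (st G γ δ x u)⁻¹ * A u v :=
    fun u v => Jp_apply G γ δ x Z hnum hstne u v
  have hAsymm : ∀ u v : P, A u v = A v u := by
    intro u v
    by_cases h : (u : V) = (v : V)
    · have : u = v := Subtype.ext h
      rw [this]
    · simp only [hA, if_neg h, if_neg (Ne.symm h), sub_zero]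
      exact amat_symm G γ δ x u v
  -- positivity of the distinguished diagonal entry
  have hamat_ii : amat G γ δ x i i = 0 := by
    have : ¬ G.Adj i i := G.irrefl
    simp [amat, SBCM.wt, this]
  have hsum_neg : ∑ j, amat G γ δ x i j < 0 := by
    obtain ⟨j₀, hj₀⟩ := hnbr i hiP
    have h1 : ∀ j ∈ Finset.univ, amat G γ δ x i j ≤ 0 := fun j _ =>
      amat_nonpos_of_cond G γ δ x hγ (fun h => hcond j h)
    have h2 : ∃ j ∈ Finset.univ, amat G γ δ x i j < (fun _ => (0:ℝ)) j :=
      ⟨j₀, Finset.mem_univ j₀, amat_neg_of_cond G γ δ x hγ hj₀ (hcond j₀ hj₀)⟩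
    calc ∑ j, amat G γ δ x i j < ∑ _j : V, (0:ℝ) := Finset.sum_lt_sum h1 h2
    _ = 0 := by simp
  have hAii : 0 < A i₀ i₀ := by
    have hAe : A i₀ i₀ = amat G γ δ x i i - ∑ j, amat G γ δ x i j := by
      simp [hA]
      rfl
    rw [hAe, hamat_ii]
    linarith
  -- square roots of strengths
  set r : P → ℝ := fun u => Real.sqrt (st G γ δ x u) with hr
  have hrpos : ∀ u : P, 0 < r u := fun u => Real.sqrt_pos.mpr (hstpos u u.2)
  have hrne : ∀ u : P, r u ≠ 0 := fun u => ne_of_gt (hrpos u)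
  have hrr : ∀ u : P, r u * r u = st G γ δ x u := fun u =>
    Real.mul_self_sqrt (le_of_lt (hstpos u u.2))
  -- symmetrized matrix
  set Sm : Matrix P P ℝ := fun u v => A u v / (r u * r v) with hSm
  have hHerm : Sm.IsHermitian := by
    show Sm.conjTranspose = Sm
    ext u v
    simp only [Matrix.conjTranspose_apply, star_trivial]
    simp only [hSm]
    rw [hAsymm v u, mul_comm (r v) (r u)]
  have hnegHerm : (-Sm).IsHermitian := hHerm.neg
  -- some eigenvalue of -Sm is negative
  have hex : ∃ k : P, hnegHerm.eigenvalues k < 0 := by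
    by_contra hc
    push_neg at hc
    have hps := hnegHerm.posSemidef_iff_eigenvalues_nonneg.mpr (fun k => hc k)
    have h2 := hps.dotProduct_mulVec_nonneg (Pi.single i₀ 1)
    have h3 : dotProduct (star (Pi.single i₀ (1:ℝ)))
        ((-Sm).mulVec (Pi.single i₀ 1)) = -Sm i₀ i₀ := by
      simp [Matrix.mulVec, dotProduct, Pi.single_apply]
      rw [Fintype.sum_eq_single i₀ (fun b hb => if_neg hb), if_pos rfl,
        Fintype.sum_eq_single i₀ (fun b hb => if_neg hb), if_pos rfl]
    rw [h3] at h2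
    have hSii : 0 < Sm i₀ i₀ := by
      simp only [hSm]
      exact div_pos hAii (mul_pos (hrpos i₀) (hrpos i₀))
    linarith
  obtain ⟨k, hk⟩ := hex
  set μ : ℝ := -(hnegHerm.eigenvalues k) with hμdef
  have hμ : 0 < μ := by simp [hμdef]; linarith
  set ψ : P → ℝ := ⇑(hnegHerm.eigenvectorBasis k) with hψdef
  have hψne : ψ ≠ 0 := fun h => hnegHerm.eigenvectorBasis.orthonormal.ne_zero k (by ext u; exact congrFun h u)
  have hmv : (-Sm).mulVec ψ = hnegHerm.eigenvalues k • ψ :=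
    hnegHerm.mulVec_eigenvectorBasis k
  have hSmψ : Sm.mulVec ψ = μ • ψ := by
    rw [Matrix.neg_mulVec] at hmv
    have := congrArg Neg.neg hmv
    rw [neg_neg] at this
    rw [this, hμdef, neg_smul]
  -- the eigenvector for Jp
  refine ⟨μ, hμ, fun u => ψ u / r u, ?_, ?_⟩
  · intro h0
    apply hψne
    funext u
    have := congrFun h0 u
    have := div_eq_zero_iff.mp this
    rcases this with h | h
    · exact h
    · exact absurd h (hrne u)
  · funext u
    have hrow : ∑ v, Sm u v * ψ v = μ * ψ u := by
      have := congrFun hSmψ u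
      simpa [Matrix.mulVec, dotProduct] using this
    show ∑ v, SBCM.Jp G Z γ δ x u v * (ψ v / r v) = μ * (ψ u / r u)
    calc ∑ v, SBCM.Jp G Z γ δ x u v * (ψ v / r v)
        = ∑ v, (r u)⁻¹ * (Sm u v * ψ v) := by
          apply Finset.sum_congr rfl
          intro v _
          rw [hJp u v]
          have h1 : st G γ δ x u = r u * r u := (hrr u).symm
          rw [h1, hSm]
          field_simp
      _ = (r u)⁻¹ * (∑ v, Sm u v * ψ v) := by rw [Finset.mul_sum]
      _ = (r u)⁻¹ * (μ * ψ u) := by rw [hrow]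
      _ = μ * (ψ u / r u) := by field_simp
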